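/- The three submodules R(e,u), R(e,v), R(e,w) pairwise intersect in exactly the diagonal set {(x, x) : x ∈ I_l}; that is, R(e,u) ∩ R(e,v) = R(e,v) ∩ R(e,w) = R(e,u) ∩ R(e,w) = {(x, x) : x ∈ I_l}, a set of 8 vectors. -/
import Mathlib


open Matrix

/-- The matrix m(a,b,c,d) = [[a,c,d],[0,b,0],[0,0,b]] over GF(2). -/
def m (a b c d : ZMod 2) : Matrix (Fin 3) (Fin 3) (ZMod 2) :=
  !![a, c, d; 0, b, 0; 0, 0, b]

lemma m_mul (a b c d a' b' c' d' : ZMod 2) :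
    m a b c d * m a' b' c' d' =
      m (a * a') (b * b') (a * c' + c * b') (a * d' + d * b') := by
  ext i j
  fin_cases i <;> fin_cases j <;>
    simp [m, Matrix.mul_apply, Fin.sum_univ_three, Matrix.vecHead, Matrix.vecTail]

/-- The ring R, as a subring of the 3×3 matrices over GF(2). -/
def Rring : Subring (Matrix (Fin 3) (Fin 3) (ZMod 2)) where
  carrier := {A | ∃ a b c d : ZMod 2, A = m a b c d}
  zero_mem' := ⟨0, 0, 0, 0, by ext i j; fin_cases i <;> fin_cases j <;> simp [m, Matrix.vecHead, Matrix.vecTail]⟩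
  one_mem' := ⟨1, 1, 0, 0, by ext i j; fin_cases i <;> fin_cases j <;> simp [m, Matrix.one_apply, Matrix.vecHead, Matrix.vecTail]⟩
  add_mem' := by
    rintro A B ⟨a, b, c, d, rfl⟩ ⟨a', b', c', d', rfl⟩
    exact ⟨a + a', b + b', c + c', d + d',
      by ext i j; fin_cases i <;> fin_cases j <;> simp [m, Matrix.vecHead, Matrix.vecTail]⟩
  neg_mem' := by
    rintro A ⟨a, b, c, d, rfl⟩
    exact ⟨-a, -b, -c, -d,
      by ext i j; fin_cases i <;> fin_cases j <;> simp [m, Matrix.vecHead, Matrix.vecTail]⟩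
  mul_mem' := by
    rintro A B ⟨a, b, c, d, rfl⟩ ⟨a', b', c', d', rfl⟩
    exact ⟨a * a', b * b', a * c' + c * b', a * d' + d * b', m_mul a b c d a' b' c' d'⟩

lemma m_mem (a b c d : ZMod 2) : m a b c d ∈ Rring := ⟨a, b, c, d, rfl⟩

/-- The element m(a,b,c,d) viewed as an element of the ring R. -/
def mm (a b c d : ZMod 2) : Rring := ⟨m a b c d, m_mem a b c d⟩

/-- The cyclic left submodule R(x,y) = {(αx, αy) : α ∈ R} of R², as a set of vectors. -/
def RM (x y : Rring) : Set (Rring × Rring) := {p | ∃ α : Rring, p = (α * x, α * y)}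

def t : Rring := mm 0 0 1 0
def f : Rring := mm 0 0 1 1
def s : Rring := mm 0 0 0 1
def e : Rring := mm 0 1 0 0
def u : Rring := mm 0 1 1 0
def v : Rring := mm 0 1 1 1
def w : Rring := mm 0 1 0 1

/-- The nine distinguished generators. -/
def gens : List (Rring × Rring) :=
  [(t, e), (f, e), (s, e), (e, u), (e, v), (e, w), (e, s), (e, f), (e, t)]

/-- The set I_l = {m(0,b,c,d) : b,c,d ∈ GF(2)}, as a subset of R. -/
def Il : Set Rring := {x | ∃ b c d : ZMod 2, x = mm 0 b c d}


lemma m_inj {a b c d a' b' c' d' : ZMod 2} (h : m a b c d = m a' b' c' d') :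
    a = a' ∧ b = b' ∧ c = c' ∧ d = d' := by
  have h00 := congrFun (congrFun h 0) 0
  have h11 := congrFun (congrFun h 1) 1
  have h01 := congrFun (congrFun h 0) 1
  have h02 := congrFun (congrFun h 0) 2
  simp [m] at h00 h11 h01 h02
  exact ⟨h00, h11, h01, h02⟩

lemma mm_inj {a b c d a' b' c' d' : ZMod 2} (h : mm a b c d = mm a' b' c' d') :
    a = a' ∧ b = b' ∧ c = c' ∧ d = d' :=
  m_inj (congrArg Subtype.val h)

lemma mm_mul (a b c d a' b' c' d' : ZMod 2) :
    mm a b c d * mm a' b' c' d' =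
      mm (a * a') (b * b') (a * c' + c * b') (a * d' + d * b') :=
  Subtype.ext (m_mul a b c d a' b' c' d')

lemma mul_e (a b c d : ZMod 2) : mm a b c d * e = mm 0 b c d := by
  rw [show e = mm 0 1 0 0 from rfl, mm_mul]; ring_nf

lemma mul_u (a b c d : ZMod 2) : mm a b c d * u = mm 0 b (a + c) d := by
  rw [show u = mm 0 1 1 0 from rfl, mm_mul]; ring_nf

lemma mul_v (a b c d : ZMod 2) : mm a b c d * v = mm 0 b (a + c) (a + d) := by
  rw [show v = mm 0 1 1 1 from rfl, mm_mul]; ring_nf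

lemma mul_w (a b c d : ZMod 2) : mm a b c d * w = mm 0 b c (a + d) := by
  rw [show w = mm 0 1 0 1 from rfl, mm_mul]; ring_nf

lemma rep (α : Rring) : ∃ a b c d : ZMod 2, α = mm a b c d := by
  obtain ⟨a, b, c, d, h⟩ := α.2
  exact ⟨a, b, c, d, Subtype.ext h⟩

lemma diag_mem (g : Rring) (hg : g = u ∨ g = v ∨ g = w) :
    {p : Rring × Rring | ∃ x ∈ Il, p = (x, x)} ⊆ RM e g := by
  rintro p ⟨x, ⟨b, c, d, rfl⟩, rfl⟩
  refine ⟨mm 0 b c d, ?_⟩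
  rcases hg with rfl | rfl | rfl
  · rw [mul_e, mul_u, zero_add]
  · rw [mul_e, mul_v, zero_add, zero_add]
  · rw [mul_e, mul_w, zero_add]

lemma cancel_zero {a d : ZMod 2} (h : d = a + d) : a = 0 :=
  add_right_cancel (h.symm.trans (zero_add d).symm)

set_option maxHeartbeats 1000000 in
/-- The submodules R(e,u), R(e,v), R(e,w) pairwise intersect in exactly the diagonal
set {(x,x) : x ∈ I_l}, a set of 8 vectors. -/
theorem pairwise_intersections_second_triple :
    RM e u ∩ RM e v = {p : Rring × Rring | ∃ x ∈ Il, p = (x, x)} ∧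
    RM e v ∩ RM e w = {p : Rring × Rring | ∃ x ∈ Il, p = (x, x)} ∧
    RM e u ∩ RM e w = {p : Rring × Rring | ∃ x ∈ Il, p = (x, x)} ∧
    {p : Rring × Rring | ∃ x ∈ Il, p = (x, x)}.ncard = 8 := by
  have huv : RM e u ∩ RM e v ⊆ {p : Rring × Rring | ∃ x ∈ Il, p = (x, x)} := by
    rintro p ⟨⟨α, hα⟩, ⟨β, hβ⟩⟩
    obtain ⟨a, b, c, d, rfl⟩ := rep α
    obtain ⟨a', b', c', d', rfl⟩ := rep β
    rw [mul_e, mul_u] at hα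
    rw [mul_e, mul_v] at hβ
    have h := hα.symm.trans hβ
    rw [Prod.mk.injEq] at h
    obtain ⟨-, hb, hc, hd⟩ := mm_inj h.1
    obtain ⟨-, -, hc2, hd2⟩ := mm_inj h.2
    subst hb hc hd
    have ha' : a' = 0 := cancel_zero hd2
    have ha : a = 0 := cancel_zero (by rw [hc2, ha', zero_add])
    exact ⟨mm 0 b c d, ⟨b, c, d, rfl⟩, by rw [hα, ha, zero_add]⟩
  have hvw : RM e v ∩ RM e w ⊆ {p : Rring × Rring | ∃ x ∈ Il, p = (x, x)} := by
    rintro p ⟨⟨α, hα⟩, ⟨β, hβ⟩⟩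
    obtain ⟨a, b, c, d, rfl⟩ := rep α
    obtain ⟨a', b', c', d', rfl⟩ := rep β
    rw [mul_e, mul_v] at hα
    rw [mul_e, mul_w] at hβ
    have h := hα.symm.trans hβ
    rw [Prod.mk.injEq] at h
    obtain ⟨-, hb, hc, hd⟩ := mm_inj h.1
    obtain ⟨-, -, hc2, hd2⟩ := mm_inj h.2
    subst hb hc hd
    have ha : a = 0 := cancel_zero hc2.symm
    exact ⟨mm 0 b c d, ⟨b, c, d, rfl⟩, by rw [hα, ha, zero_add, zero_add]⟩
  have huw : RM e u ∩ RM e w ⊆ {p : Rring × Rring | ∃ x ∈ Il, p = (x, x)} := by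
    rintro p ⟨⟨α, hα⟩, ⟨β, hβ⟩⟩
    obtain ⟨a, b, c, d, rfl⟩ := rep α
    obtain ⟨a', b', c', d', rfl⟩ := rep β
    rw [mul_e, mul_u] at hα
    rw [mul_e, mul_w] at hβ
    have h := hα.symm.trans hβ
    rw [Prod.mk.injEq] at h
    obtain ⟨-, hb, hc, hd⟩ := mm_inj h.1
    obtain ⟨-, -, hc2, hd2⟩ := mm_inj h.2
    subst hb hc hd
    have ha : a = 0 := cancel_zero hc2.symm
    exact ⟨mm 0 b c d, ⟨b, c, d, rfl⟩, by rw [hα, ha, zero_add]⟩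
  refine ⟨Set.Subset.antisymm huv (Set.subset_inter (diag_mem u (Or.inl rfl))
      (diag_mem v (Or.inr (Or.inl rfl)))),
    Set.Subset.antisymm hvw (Set.subset_inter (diag_mem v (Or.inr (Or.inl rfl)))
      (diag_mem w (Or.inr (Or.inr rfl)))),
    Set.Subset.antisymm huw (Set.subset_inter (diag_mem u (Or.inl rfl))
      (diag_mem w (Or.inr (Or.inr rfl)))), ?_⟩
  have hinj : Function.Injective
      (fun q : ZMod 2 × ZMod 2 × ZMod 2 => ((mm 0 q.1 q.2.1 q.2.2 : Rring), mm 0 q.1 q.2.1 q.2.2)) := by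
    rintro ⟨b, c, d⟩ ⟨b', c', d'⟩ h
    rw [Prod.mk.injEq] at h
    obtain ⟨-, hb, hc, hd⟩ := mm_inj h.1
    exact Prod.ext hb (Prod.ext hc hd)
  have himg : {p : Rring × Rring | ∃ x ∈ Il, p = (x, x)} =
      (fun q : ZMod 2 × ZMod 2 × ZMod 2 => ((mm 0 q.1 q.2.1 q.2.2 : Rring), mm 0 q.1 q.2.1 q.2.2)) ''
        Set.univ := by
    ext p
    constructor
    · rintro ⟨x, ⟨b, c, d, rfl⟩, rfl⟩
      exact ⟨(b, c, d), trivial, rfl⟩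
    · rintro ⟨⟨b, c, d⟩, -, rfl⟩
      exact ⟨mm 0 b c d, ⟨b, c, d, rfl⟩, rfl⟩
  rw [himg, Set.ncard_image_of_injective _ hinj, Set.ncard_univ]
  simp [Nat.card_eq_fintype_card]
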